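/- Characterization of truncated Gröbner bases (Buchberger criterion for truncations): let the grading given by W be positive, let σ be a term ordering on ℕ^n, let g_1,…,g_s ∈ P be nonzero polynomials with g_k W-homogeneous of degree d_k ∈ ℤ^m, let I = (g_1,…,g_s) be the ideal they generate, and let D ∈ ℤ^m. For each k let t_k = deg_σ(g_k) and lc_k ∈ K∖{0} the coefficient of x^{t_k} in g_k; for i < j set L_ij = t_i ⊔ t_j (componentwise max) and S_ij = lc_i⁻¹ x^{L_ij − t_i} g_i − lc_j⁻¹ x^{L_ij − t_j} g_j. Then the following are equivalent: (b) for every nonzero W-homogeneous v ∈ I whose W-degree e satisfies e ≤_Lex D, there exists k with d_k ≤_Lex D such that t_k ≤ deg_σ(v) componentwise (i.e. the leading term of some g_k of degree at most D divides the leading term of v); (c) for all i < j with deg_W(x^{L_ij}) ≤_Lex D, the S-polynomial S_ij is zero or admits a representation S_ij = ∑_k q_k g_k in which q_k = 0 whenever d_k is not ≤_Lex D, and deg_σ(q_k g_k) ≤_σ deg_σ(S_ij) for every k with q_k g_k ≠ 0 (i.e. S_ij reduces to zero against {g_k : d_k ≤_Lex D}). -/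

import Mathlib

open MvPolynomial

/-- The `W`-degree of an exponent vector `α ∈ ℕ^n`: `W·α = ∑ⱼ αⱼ w⁽ʲ⁾ ∈ ℤ^m`. -/
def wdeg {m n : ℕ} (W : Matrix (Fin m) (Fin n) ℤ) (α : Fin n →₀ ℕ) : Fin m → ℤ :=
  fun i => ∑ j, (α j : ℤ) * W i j

/-- A polynomial is `W`-homogeneous of degree `d ∈ ℤ^m` if every monomial in its support
has `W`-degree `d`. -/
def IsWHomogeneous {K : Type*} [CommSemiring K] {m n : ℕ} (W : Matrix (Fin m) (Fin n) ℤ)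
    (p : MvPolynomial (Fin n) K) (d : Fin m → ℤ) : Prop :=
  ∀ α ∈ p.support, wdeg W α = d

/-- The grading given by `W` is positive: the rows of `W` are `ℤ`-linearly independent,
no column of `W` is zero, and the first non-zero entry of each column of `W` is positive. -/
def PositiveGrading {m n : ℕ} (W : Matrix (Fin m) (Fin n) ℤ) : Prop :=
  LinearIndependent ℤ (fun i : Fin m => (fun j => W i j : Fin n → ℤ)) ∧
  (∀ j : Fin n, ∃ i : Fin m, W i j ≠ 0) ∧
  (∀ j : Fin n, ∃ i : Fin m, 0 < W i j ∧ ∀ i' < i, W i' j = 0)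

/-- The `σ`-degree (exponent of the `σ`-leading term) of a polynomial: the `σ`-largest
exponent vector in its support. -/
noncomputable def mdeg {K : Type*} [CommSemiring K] {n : ℕ} (σ : MonomialOrder (Fin n))
    (f : MvPolynomial (Fin n) K) : Fin n →₀ ℕ :=
  σ.toSyn.symm (f.support.sup fun α => σ.toSyn α)

/-- The S-polynomial of `f` and `g` with respect to the term ordering `σ`:
`S = lc(f)⁻¹·x^(L−deg f)·f − lc(g)⁻¹·x^(L−deg g)·g` where `L = deg f ⊔ deg g`. -/
noncomputable def sPoly {K : Type*} [Field K] {n : ℕ} (σ : MonomialOrder (Fin n))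
    (f g : MvPolynomial (Fin n) K) : MvPolynomial (Fin n) K :=
  monomial ((mdeg σ f ⊔ mdeg σ g) - mdeg σ f) ((f.coeff (mdeg σ f))⁻¹) * f -
    monomial ((mdeg σ f ⊔ mdeg σ g) - mdeg σ g) ((g.coeff (mdeg σ g))⁻¹) * g

section Mdeg
variable {K : Type*} [CommSemiring K] {n : ℕ} (σ : MonomialOrder (Fin n))
  (f g : MvPolynomial (Fin n) K)

lemma toSyn_mdeg : σ.toSyn (mdeg σ f) = f.support.sup σ.toSyn := by
  simp [mdeg]

variable {σ f g}

lemma le_mdeg {β : Fin n →₀ ℕ} (h : f.coeff β ≠ 0) :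
    σ.toSyn β ≤ σ.toSyn (mdeg σ f) := by
  rw [toSyn_mdeg]; exact Finset.le_sup (mem_support_iff.mpr h)

lemma coeff_key {a t μ : Fin n →₀ ℕ} (h : a + t = μ) (r : K) (p : MvPolynomial (Fin n) K) :
    (monomial a r * p).coeff μ = r * p.coeff t := by
  rw [← h, coeff_monomial_mul]

lemma coeff_eq_zero_of_mdeg_lt {β : Fin n →₀ ℕ} (h : σ.toSyn (mdeg σ f) < σ.toSyn β) :
    f.coeff β = 0 := by
  by_contra hc; exact absurd (le_mdeg hc) (not_le.mpr h)

lemma mdeg_mem_support (hf : f ≠ 0) : mdeg σ f ∈ f.support := by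
  obtain ⟨α, hα, hsup⟩ := Finset.exists_mem_eq_sup _ (support_nonempty.mpr hf) σ.toSyn
  have : mdeg σ f = α := by rw [mdeg, hsup]; exact σ.toSyn.symm_apply_apply α
  rwa [this]

lemma coeff_mdeg_ne_zero (hf : f ≠ 0) : f.coeff (mdeg σ f) ≠ 0 :=
  mem_support_iff.mp (mdeg_mem_support hf)

@[simp] lemma mdeg_zero : mdeg σ (0 : MvPolynomial (Fin n) K) = 0 := by
  simp [mdeg]

lemma toSyn_mdeg_add_le :
    σ.toSyn (mdeg σ (f + g)) ≤ max (σ.toSyn (mdeg σ f)) (σ.toSyn (mdeg σ g)) := by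
  classical
  rw [toSyn_mdeg]
  apply Finset.sup_le
  intro β hβ
  rcases Finset.mem_union.mp (support_add hβ) with h | h
  · exact le_max_of_le_left (le_mdeg (mem_support_iff.mp h))
  · exact le_max_of_le_right (le_mdeg (mem_support_iff.mp h))

lemma mdeg_monomial {a : Fin n →₀ ℕ} {c : K} (hc : c ≠ 0) :
    mdeg σ (monomial a c) = a := by
  classical
  rw [mdeg, support_monomial, if_neg hc, Finset.sup_singleton, σ.toSyn.symm_apply_apply]

lemma coeff_mul_mdeg_add_mdeg (hf : f ≠ 0) (hg : g ≠ 0) :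
    (f * g).coeff (mdeg σ f + mdeg σ g) = f.coeff (mdeg σ f) * g.coeff (mdeg σ g) := by
  classical
  rw [coeff_mul]
  rw [Finset.sum_eq_single (mdeg σ f, mdeg σ g)]
  · intro b hb hne
    rw [Finset.HasAntidiagonal.mem_antidiagonal] at hb
    by_contra hc
    have h1 : f.coeff b.1 ≠ 0 := fun h => hc (by simp [h])
    have h2 : g.coeff b.2 ≠ 0 := fun h => hc (by simp [h])
    have hb1 := le_mdeg (σ := σ) h1
    have hb2 := le_mdeg (σ := σ) h2
    have hsum : σ.toSyn b.1 + σ.toSyn b.2 = σ.toSyn (mdeg σ f) + σ.toSyn (mdeg σ g) := by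
      rw [← map_add, ← map_add, hb]
    have e1 : σ.toSyn b.1 = σ.toSyn (mdeg σ f) := by
      by_contra hne1
      exact absurd hsum (ne_of_lt (add_lt_add_of_lt_of_le (lt_of_le_of_ne hb1 hne1) hb2))
    have e2 : σ.toSyn b.2 = σ.toSyn (mdeg σ g) := by
      rw [e1] at hsum
      exact add_left_cancel hsum
    exact hne (Prod.ext_iff.mpr ⟨σ.toSyn.injective e1, σ.toSyn.injective e2⟩)
  · intro h
    simp only [Finset.HasAntidiagonal.mem_antidiagonal, not_true_eq_false] at h

lemma toSyn_mdeg_mul_le : σ.toSyn (mdeg σ (f * g)) ≤ σ.toSyn (mdeg σ f) + σ.toSyn (mdeg σ g) := by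
  classical
  rw [toSyn_mdeg]
  apply Finset.sup_le
  intro β hβ
  obtain ⟨β₁, h1, β₂, h2, rfl⟩ := Finset.mem_add.mp (support_mul f g hβ)
  rw [map_add]
  exact add_le_add (le_mdeg (mem_support_iff.mp h1)) (le_mdeg (mem_support_iff.mp h2))

end Mdeg

section MdegMul
variable {K : Type*} [Field K] {n : ℕ} {σ : MonomialOrder (Fin n)}
  {f g : MvPolynomial (Fin n) K}

lemma mdeg_mul (hf : f ≠ 0) (hg : g ≠ 0) : mdeg σ (f * g) = mdeg σ f + mdeg σ g := by
  have hc : (f * g).coeff (mdeg σ f + mdeg σ g) ≠ 0 := by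
    rw [coeff_mul_mdeg_add_mdeg hf hg]
    exact mul_ne_zero (coeff_mdeg_ne_zero hf) (coeff_mdeg_ne_zero hg)
  have h1 := le_mdeg (σ := σ) hc
  have h2 := toSyn_mdeg_mul_le (σ := σ) (f := f) (g := g)
  rw [map_add] at h1
  have : σ.toSyn (mdeg σ (f * g)) = σ.toSyn (mdeg σ f) + σ.toSyn (mdeg σ g) :=
    le_antisymm h2 h1
  apply σ.toSyn.injective
  rw [this, map_add]

end MdegMul



section Wdeg
variable {m n : ℕ} {W : Matrix (Fin m) (Fin n) ℤ}

lemma wdeg_add (α β : Fin n →₀ ℕ) : wdeg W (α + β) = wdeg W α + wdeg W β := by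
  funext i
  simp only [wdeg, Finsupp.add_apply, Pi.add_apply]
  rw [← Finset.sum_add_distrib]
  congr 1; funext j; push_cast; ring

@[simp] lemma wdeg_zero : wdeg W (0 : Fin n →₀ ℕ) = 0 := by
  funext i; simp [wdeg]

lemma wdeg_tsub {α β : Fin n →₀ ℕ} (h : β ≤ α) :
    wdeg W (α - β) = wdeg W α - wdeg W β := by
  have := wdeg_add (W := W) (α - β) β
  rw [tsub_add_cancel_of_le h] at this
  rw [this]; ring

lemma wdeg_single (j : Fin n) (k : ℕ) :
    wdeg W (Finsupp.single j k) = fun i => (k : ℤ) * W i j := by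
  funext i
  simp only [wdeg, Finsupp.single_apply]
  rw [Finset.sum_eq_single j]
  · simp
  · intro b _ hbj; simp [Ne.symm hbj]
  · simp

lemma toLex_wdeg_nonneg (hpos : ∀ j : Fin n, ∃ i : Fin m, 0 < W i j ∧ ∀ i' < i, W i' j = 0)
    (α : Fin n →₀ ℕ) : 0 ≤ toLex (wdeg W α) := by
  induction α using Finsupp.induction with
  | zero => simp
  | single_add j k α hjα hk ih =>
    rw [wdeg_add, toLex_add, wdeg_single]
    have h1 : 0 ≤ toLex (fun i => (k : ℤ) * W i j) := by
      rcases Nat.eq_zero_or_pos k with hk0 | hk0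
      · simp [hk0]
        rfl
      obtain ⟨i, hi, hi'⟩ := hpos j
      refine le_of_lt ?_
      refine ⟨i, fun i' h => ?_, ?_⟩
      · show (0 : Fin m → ℤ) i' = (k : ℤ) * W i' j
        simp [hi' i' h]
      show (0 : Fin m → ℤ) i < (k : ℤ) * W i j
      simp only [Pi.zero_apply]
      positivity
    calc (0 : Lex (Fin m → ℤ)) ≤ toLex (wdeg W α) := ih
    _ ≤ toLex (fun i => (k : ℤ) * W i j) + toLex (wdeg W α) := le_add_of_nonneg_left h1

lemma toLex_wdeg_mono (hpos : ∀ j : Fin n, ∃ i : Fin m, 0 < W i j ∧ ∀ i' < i, W i' j = 0)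
    {α β : Fin n →₀ ℕ} (h : β ≤ α) : toLex (wdeg W β) ≤ toLex (wdeg W α) := by
  have : wdeg W α = wdeg W β + wdeg W (α - β) := by
    rw [← wdeg_add, add_tsub_cancel_of_le h]
  rw [this, toLex_add]
  exact le_add_of_nonneg_right (toLex_wdeg_nonneg hpos _)

end Wdeg

section Homog
variable {K : Type*} [CommRing K] {m n : ℕ} {W : Matrix (Fin m) (Fin n) ℤ}
  {p q : MvPolynomial (Fin n) K} {c d : Fin m → ℤ}

lemma IsWHomogeneous.wdeg_eq (hp : IsWHomogeneous W p c) {α : Fin n →₀ ℕ}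
    (hα : p.coeff α ≠ 0) : wdeg W α = c := hp α (mem_support_iff.mpr hα)

lemma IsWHomogeneous.mul (hp : IsWHomogeneous W p c) (hq : IsWHomogeneous W q d) :
    IsWHomogeneous W (p * q) (c + d) := by
  classical
  intro α hα
  obtain ⟨α₁, h1, α₂, h2, rfl⟩ := Finset.mem_add.mp (support_mul p q hα)
  rw [wdeg_add, hp α₁ h1, hq α₂ h2]

lemma IsWHomogeneous.neg (hp : IsWHomogeneous W p c) : IsWHomogeneous W (-p) c := by
  intro α hα
  exact hp α (by rwa [support_neg] at hα)

lemma IsWHomogeneous.add (hp : IsWHomogeneous W p c) (hq : IsWHomogeneous W q c) :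
    IsWHomogeneous W (p + q) c := by
  classical
  intro α hα
  rcases Finset.mem_union.mp (support_add hα) with h | h
  · exact hp α h
  · exact hq α h

lemma IsWHomogeneous.sub (hp : IsWHomogeneous W p c) (hq : IsWHomogeneous W q c) :
    IsWHomogeneous W (p - q) c := by
  rw [sub_eq_add_neg]; exact hp.add hq.neg

lemma isWHomogeneous_monomial (a : Fin n →₀ ℕ) (r : K) :
    IsWHomogeneous W (monomial a r) (wdeg W a) := by
  classical
  intro α hα
  rw [support_monomial] at hα
  split at hα
  · simp at hα
  · rw [Finset.mem_singleton.mp hα]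

lemma isWHomogeneous_zero : IsWHomogeneous W (0 : MvPolynomial (Fin n) K) c := by
  intro α hα; simp at hα

end Homog

section Hcomp
variable {K : Type*} [CommRing K] {m n : ℕ} (W : Matrix (Fin m) (Fin n) ℤ)

open Classical in
/-- The `W`-homogeneous component of degree `c` of a polynomial. -/
noncomputable def hcomp (c : Fin m → ℤ) (p : MvPolynomial (Fin n) K) : MvPolynomial (Fin n) K :=
  ∑ α ∈ p.support.filter (fun α => wdeg W α = c), monomial α (p.coeff α)

variable {W}
variable {p q g : MvPolynomial (Fin n) K} {c d : Fin m → ℤ}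

lemma coeff_hcomp (c : Fin m → ℤ) (p : MvPolynomial (Fin n) K) (β : Fin n →₀ ℕ) :
    (hcomp W c p).coeff β = if wdeg W β = c then p.coeff β else 0 := by
  classical
  rw [hcomp, coeff_sum]
  simp only [coeff_monomial]
  rw [Finset.sum_ite_eq' (p.support.filter (fun α => wdeg W α = c)) β (fun α => p.coeff α)]
  by_cases h1 : wdeg W β = c
  · by_cases h2 : p.coeff β = 0
    · simp [h1, h2]
    · simp [h1, h2, Finset.mem_filter, mem_support_iff]
  · simp [h1, Finset.mem_filter]

@[simp] lemma hcomp_zero : hcomp W c (0 : MvPolynomial (Fin n) K) = 0 := by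
  simp [hcomp]

lemma hcomp_isWHomogeneous : IsWHomogeneous W (hcomp W c p) c := by
  intro α hα
  rw [mem_support_iff, coeff_hcomp] at hα
  by_contra h
  rw [if_neg h] at hα
  exact hα rfl

lemma support_hcomp_subset : (hcomp W c p).support ⊆ p.support := by
  intro α hα
  rw [mem_support_iff, coeff_hcomp] at hα
  rw [mem_support_iff]
  intro h
  apply hα
  split <;> simp [h]

lemma hcomp_ne_zero_imp (h : hcomp W c p ≠ 0) : p ≠ 0 ∧ ∃ α, p.coeff α ≠ 0 ∧ wdeg W α = c := by
  obtain ⟨α, hα⟩ := support_nonempty.mpr h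
  have h1 := mem_support_iff.mp hα
  rw [coeff_hcomp] at h1
  by_cases h2 : wdeg W α = c
  · rw [if_pos h2] at h1
    exact ⟨fun h0 => h1 (by simp [h0]), α, h1, h2⟩
  · rw [if_neg h2] at h1; exact absurd rfl h1

lemma toSyn_mdeg_hcomp_le {σ : MonomialOrder (Fin n)} :
    σ.toSyn (mdeg σ (hcomp W c p)) ≤ σ.toSyn (mdeg σ p) := by
  rw [toSyn_mdeg, toSyn_mdeg]
  exact Finset.sup_mono support_hcomp_subset

lemma coeff_hcomp_mul (hg : IsWHomogeneous W g d) {μ : Fin n →₀ ℕ} (hμ : wdeg W μ = c + d) :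
    (hcomp W c p * g).coeff μ = (p * g).coeff μ := by
  classical
  have hr : ((p - hcomp W c p) * g).coeff μ = 0 := by
    by_contra hc
    obtain ⟨α, h1, β, h2, hab⟩ := Finset.mem_add.mp
      (support_mul _ _ (mem_support_iff.mpr hc))
    have hα : wdeg W α ≠ c := by
      have := mem_support_iff.mp h1
      rw [coeff_sub, coeff_hcomp] at this
      intro h
      rw [if_pos h] at this
      simp at this
    apply hα
    have h3 : wdeg W μ = wdeg W α + d := by rw [← hab, wdeg_add, hg β h2]
    rw [hμ] at h3
    exact (add_right_cancel h3.symm)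
  have : p * g = hcomp W c p * g + (p - hcomp W c p) * g := by ring
  rw [this, coeff_add, hr, add_zero]

end Hcomp

section SubLe
variable {K : Type*} [CommRing K] {n : ℕ} {σ : MonomialOrder (Fin n)}
  {f g : MvPolynomial (Fin n) K}

@[simp] lemma mdeg_neg : mdeg σ (-f) = mdeg σ f := by
  rw [mdeg, mdeg, support_neg]

lemma toSyn_mdeg_sub_le :
    σ.toSyn (mdeg σ (f - g)) ≤ max (σ.toSyn (mdeg σ f)) (σ.toSyn (mdeg σ g)) := by
  rw [sub_eq_add_neg]
  have := toSyn_mdeg_add_le (σ := σ) (f := f) (g := -g)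
  rwa [mdeg_neg] at this

end SubLe

section SPoly
variable {K : Type*} [Field K] {m n : ℕ} {W : Matrix (Fin m) (Fin n) ℤ}
  {σ : MonomialOrder (Fin n)} {f g : MvPolynomial (Fin n) K}

lemma mdeg_monomial_mul {a : Fin n →₀ ℕ} {c : K} (hc : c ≠ 0) (hf : f ≠ 0) :
    mdeg σ (monomial a c * f) = a + mdeg σ f := by
  rw [mdeg_mul (by simp [monomial_eq_zero, hc]) hf, mdeg_monomial hc]

lemma toSyn_mdeg_sPoly_lt (hf : f ≠ 0) (hg : g ≠ 0) (hS : sPoly σ f g ≠ 0) :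
    σ.toSyn (mdeg σ (sPoly σ f g)) < σ.toSyn (mdeg σ f ⊔ mdeg σ g) := by
  set L := mdeg σ f ⊔ mdeg σ g with hL
  have hcf : f.coeff (mdeg σ f) ≠ 0 := coeff_mdeg_ne_zero hf
  have hcg : g.coeff (mdeg σ g) ≠ 0 := coeff_mdeg_ne_zero hg
  have hA : mdeg σ (monomial (L - mdeg σ f) ((f.coeff (mdeg σ f))⁻¹) * f) = L := by
    rw [mdeg_monomial_mul (inv_ne_zero hcf) hf, tsub_add_cancel_of_le le_sup_left]
  have hB : mdeg σ (monomial (L - mdeg σ g) ((g.coeff (mdeg σ g))⁻¹) * g) = L := by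
    rw [mdeg_monomial_mul (inv_ne_zero hcg) hg, tsub_add_cancel_of_le le_sup_right]
  have hle : σ.toSyn (mdeg σ (sPoly σ f g)) ≤ σ.toSyn L := by
    have := toSyn_mdeg_sub_le (σ := σ)
      (f := monomial (L - mdeg σ f) ((f.coeff (mdeg σ f))⁻¹) * f)
      (g := monomial (L - mdeg σ g) ((g.coeff (mdeg σ g))⁻¹) * g)
    rw [hA, hB, max_self] at this
    exact this
  have hcoeff : (sPoly σ f g).coeff L = 0 := by
    have e1 : (L - mdeg σ f) + mdeg σ f = L := tsub_add_cancel_of_le le_sup_left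
    have e2 : (L - mdeg σ g) + mdeg σ g = L := tsub_add_cancel_of_le le_sup_right
    have key : ∀ (a t : Fin n →₀ ℕ) (c : K) (p : MvPolynomial (Fin n) K), a + t = L →
        (monomial a c * p).coeff L = c * p.coeff t := by
      intro a t c p h
      rw [← h, coeff_monomial_mul]
    rw [sPoly, coeff_sub, ← hL, key _ _ _ _ e1, key _ _ _ _ e2,
      inv_mul_cancel₀ hcf, inv_mul_cancel₀ hcg, sub_self]
  rcases lt_or_eq_of_le hle with h | h
  · exact h
  · exfalso
    have : mdeg σ (sPoly σ f g) = L := σ.toSyn.injective h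
    exact coeff_mdeg_ne_zero hS (this ▸ hcoeff)

lemma sPoly_isWHomogeneous {df dg : Fin m → ℤ} (hf : IsWHomogeneous W f df)
    (hg : IsWHomogeneous W g dg) (hf0 : f ≠ 0) (hg0 : g ≠ 0) :
    IsWHomogeneous W (sPoly σ f g) (wdeg W (mdeg σ f ⊔ mdeg σ g)) := by
  set L := mdeg σ f ⊔ mdeg σ g with hL
  have h1 : wdeg W (L - mdeg σ f) + df = wdeg W L := by
    rw [wdeg_tsub le_sup_left, hf.wdeg_eq (coeff_mdeg_ne_zero hf0)]
    ring
  have h2 : wdeg W (L - mdeg σ g) + dg = wdeg W L := by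
    rw [wdeg_tsub le_sup_right, hg.wdeg_eq (coeff_mdeg_ne_zero hg0)]
    ring
  rw [sPoly, ← hL]
  exact (h1 ▸ (isWHomogeneous_monomial _ _).mul hf).sub (h2 ▸ (isWHomogeneous_monomial _ _).mul hg)

lemma monomial_mul_sPoly {μ : Fin n →₀ ℕ} (b : K)
    (hμ : mdeg σ f ⊔ mdeg σ g ≤ μ) :
    monomial (μ - (mdeg σ f ⊔ mdeg σ g)) b * sPoly σ f g =
      monomial (μ - mdeg σ f) (b * (f.coeff (mdeg σ f))⁻¹) * f -
        monomial (μ - mdeg σ g) (b * (g.coeff (mdeg σ g))⁻¹) * g := by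
  set L := mdeg σ f ⊔ mdeg σ g with hL
  have e1 : (μ - L) + (L - mdeg σ f) = μ - mdeg σ f :=
    tsub_add_tsub_cancel hμ le_sup_left
  have e2 : (μ - L) + (L - mdeg σ g) = μ - mdeg σ g :=
    tsub_add_tsub_cancel hμ le_sup_right
  rw [sPoly, ← hL, mul_sub, ← mul_assoc, ← mul_assoc, monomial_mul, monomial_mul, e1, e2]

end SPoly

section Rep
variable {K : Type*} [Field K] {m n s : ℕ} {W : Matrix (Fin m) (Fin n) ℤ}
  {g : Fin s → MvPolynomial (Fin n) K} {d : Fin s → Fin m → ℤ} {e : Fin m → ℤ}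

lemma rep_homogenize (hgh : ∀ k, IsWHomogeneous W (g k) (d k))
    {v : MvPolynomial (Fin n) K} (hv : IsWHomogeneous W v e)
    {q : Fin s → MvPolynomial (Fin n) K} (hrep : v = ∑ k, q k * g k) :
    v = ∑ k, hcomp W (e - d k) (q k) * g k := by
  ext β
  rw [coeff_sum]
  by_cases hβ : wdeg W β = e
  · have : ∀ k, (hcomp W (e - d k) (q k) * g k).coeff β = (q k * g k).coeff β := by
      intro k
      exact coeff_hcomp_mul (hgh k) (by rw [hβ]; ring)
    rw [Finset.sum_congr rfl (fun k _ => this k), ← coeff_sum, ← hrep]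
  · have h1 : v.coeff β = 0 := by
      by_contra hc
      exact hβ (hv.wdeg_eq hc)
    have h2 : ∀ k, (hcomp W (e - d k) (q k) * g k).coeff β = 0 := by
      intro k
      by_contra hc
      apply hβ
      have := (hcomp_isWHomogeneous.mul (hgh k)).wdeg_eq hc
      rw [this]; ring
    rw [h1, Finset.sum_congr rfl (fun k _ => h2 k), Finset.sum_const_zero]

end Rep

section Main
variable {K : Type*} [Field K] {m n s : ℕ} {W : Matrix (Fin m) (Fin n) ℤ}
  {σ : MonomialOrder (Fin n)} {g : Fin s → MvPolynomial (Fin n) K}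
  {d : Fin s → Fin m → ℤ} {D : Fin m → ℤ}

lemma syn_nonneg {a : MonomialOrder.syn σ} : (0 : σ.syn) ≤ a := by
  rw [← σ.bot_eq_zero]; exact bot_le

lemma sum_ite_single (k₀ : Fin s) (A : MvPolynomial (Fin n) K) :
    ∑ k, (if k = k₀ then A else 0) * g k = A * g k₀ := by
  classical
  have h : ∀ k, (if k = k₀ then A else 0) * g k = if k = k₀ then A * g k else 0 := by
    intro k; split <;> simp
  rw [Finset.sum_congr rfl (fun k _ => h k), Finset.sum_ite_eq' Finset.univ k₀]
  simp

lemma division (hpos : ∀ j : Fin n, ∃ i : Fin m, 0 < W i j ∧ ∀ i' < i, W i' j = 0)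
    (hg0 : ∀ k, g k ≠ 0) (hgh : ∀ k, IsWHomogeneous W (g k) (d k))
    (hb : ∀ v ∈ Ideal.span (Set.range g), v ≠ 0 → ∀ e : Fin m → ℤ, IsWHomogeneous W v e →
        toLex e ≤ toLex D →
        ∃ k, toLex (d k) ≤ toLex D ∧ mdeg σ (g k) ≤ mdeg σ v) :
    ∀ u ∈ Ideal.span (Set.range g), u ≠ 0 → ∀ e' : Fin m → ℤ, IsWHomogeneous W u e' →
      toLex e' ≤ toLex D →
      ∃ q : Fin s → MvPolynomial (Fin n) K,
        u = ∑ k, q k * g k ∧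
        (∀ k, ¬ toLex (d k) ≤ toLex D → q k = 0) ∧
        (∀ k, q k * g k ≠ 0 →
          σ.toSyn (mdeg σ (q k * g k)) ≤ σ.toSyn (mdeg σ u)) := by
  classical
  intro u hu hu0 e' he' heD
  generalize hδ : σ.toSyn (mdeg σ u) = δ
  induction δ using WellFoundedLT.induction generalizing u e' with
  | ind δ IH =>
  subst hδ
  obtain ⟨k₀, hk₀D, hdiv⟩ := hb u hu hu0 e' he' heD
  set t0 := mdeg σ (g k₀) with ht0
  have hlc0 : (g k₀).coeff t0 ≠ 0 := coeff_mdeg_ne_zero (hg0 k₀)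
  set c := u.coeff (mdeg σ u) * ((g k₀).coeff t0)⁻¹ with hc
  have hc0 : c ≠ 0 := mul_ne_zero (coeff_mdeg_ne_zero hu0) (inv_ne_zero hlc0)
  set mono : MvPolynomial (Fin n) K := monomial (mdeg σ u - t0) c with hmono
  have e0 : (mdeg σ u - t0) + t0 = mdeg σ u := tsub_add_cancel_of_le hdiv
  have hmono0 : mono ≠ 0 := by simp [hmono, monomial_eq_zero, hc0]
  have hmdegmono : mdeg σ (mono * g k₀) = mdeg σ u := by
    rw [hmono, mdeg_monomial_mul hc0 (hg0 k₀), ← ht0, e0]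
  have hcoeffmono : (mono * g k₀).coeff (mdeg σ u) = u.coeff (mdeg σ u) := by
    have key : ∀ (a t : Fin n →₀ ℕ) (r : K) (p : MvPolynomial (Fin n) K), a + t = mdeg σ u →
        (monomial a r * p).coeff (mdeg σ u) = r * p.coeff t := by
      intro a t r p h
      rw [← h, coeff_monomial_mul]
    rw [hmono, key _ _ _ _ e0, hc, mul_assoc, inv_mul_cancel₀ hlc0, mul_one]
  have hmonohom : IsWHomogeneous W (mono * g k₀) e' := by
    have h1 : wdeg W (mdeg σ u - t0) + d k₀ = e' := by
      rw [wdeg_tsub hdiv, he'.wdeg_eq (coeff_mdeg_ne_zero hu0),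
        (hgh k₀).wdeg_eq hlc0]
      ring
    exact h1 ▸ (isWHomogeneous_monomial _ _).mul (hgh k₀)
  set u' := u - mono * g k₀ with hu'def
  have hu'span : u' ∈ Ideal.span (Set.range g) :=
    sub_mem hu (Ideal.mul_mem_left _ _ (Ideal.subset_span ⟨k₀, rfl⟩))
  have hu'hom : IsWHomogeneous W u' e' := he'.sub hmonohom
  have hu'le : σ.toSyn (mdeg σ u') ≤ σ.toSyn (mdeg σ u) := by
    have := toSyn_mdeg_sub_le (σ := σ) (f := u) (g := mono * g k₀)
    rwa [hmdegmono, max_self] at this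
  have hu'coeff : u'.coeff (mdeg σ u) = 0 := by
    rw [hu'def, coeff_sub, hcoeffmono, sub_self]
  by_cases hu'0 : u' = 0
  · refine ⟨fun k => if k = k₀ then mono else 0, ?_, ?_, ?_⟩
    · rw [sum_ite_single]
      have : u = mono * g k₀ := by
        have := sub_eq_zero.mp (hu'def ▸ hu'0)
        exact this
      exact this
    · intro k hk
      rcases eq_or_ne k k₀ with rfl | hne
      · exact absurd hk₀D hk
      · simp [hne]
    · intro k hk
      rcases eq_or_ne k k₀ with rfl | hne
      · simp only [eq_self_iff_true, if_true]
        rw [hmdegmono]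
      · simp [hne] at hk
  · have hu'lt : σ.toSyn (mdeg σ u') < σ.toSyn (mdeg σ u) := by
      rcases lt_or_eq_of_le hu'le with h | h
      · exact h
      · exfalso
        exact coeff_mdeg_ne_zero hu'0 ((σ.toSyn.injective h) ▸ hu'coeff)
    obtain ⟨q', hq'rep, hq'zero, hq'mdeg⟩ :=
      IH (σ.toSyn (mdeg σ u')) hu'lt u' hu'span hu'0 e' hu'hom heD rfl
    refine ⟨fun k => q' k + (if k = k₀ then mono else 0), ?_, ?_, ?_⟩
    · have : ∀ k, (q' k + (if k = k₀ then mono else 0)) * g k =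
          q' k * g k + (if k = k₀ then mono else 0) * g k := fun k => by ring
      rw [Finset.sum_congr rfl (fun k _ => this k), Finset.sum_add_distrib,
        sum_ite_single, ← hq'rep]
      rw [hu'def]; ring
    · intro k hk
      rcases eq_or_ne k k₀ with rfl | hne
      · exact absurd hk₀D hk
      · simp [hne, hq'zero k hk]
    · intro k hk
      have hexp : (q' k + (if k = k₀ then mono else 0)) * g k =
          q' k * g k + (if k = k₀ then mono else 0) * g k := by ring
      rw [hexp]
      refine le_trans (toSyn_mdeg_add_le) (max_le ?_ ?_)
      · by_cases h0 : q' k * g k = 0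
        · rw [h0, mdeg_zero, map_zero]; exact syn_nonneg
        · exact le_trans (hq'mdeg k h0) (le_of_lt hu'lt)
      · rcases eq_or_ne k k₀ with rfl | hne
        · rw [if_pos rfl, hmdegmono]
        · rw [if_neg hne, zero_mul, mdeg_zero, map_zero]; exact syn_nonneg

end Main

section BtoC
variable {K : Type*} [Field K] {m n s : ℕ} {W : Matrix (Fin m) (Fin n) ℤ}
  {σ : MonomialOrder (Fin n)} {g : Fin s → MvPolynomial (Fin n) K}
  {d : Fin s → Fin m → ℤ} {D : Fin m → ℤ}

lemma b_to_c (hpos : ∀ j : Fin n, ∃ i : Fin m, 0 < W i j ∧ ∀ i' < i, W i' j = 0)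
    (hg0 : ∀ k, g k ≠ 0) (hgh : ∀ k, IsWHomogeneous W (g k) (d k))
    (hb : ∀ v ∈ Ideal.span (Set.range g), v ≠ 0 → ∀ e : Fin m → ℤ, IsWHomogeneous W v e →
        toLex e ≤ toLex D →
        ∃ k, toLex (d k) ≤ toLex D ∧ mdeg σ (g k) ≤ mdeg σ v) :
    ∀ i j : Fin s, i < j →
        toLex (wdeg W (mdeg σ (g i) ⊔ mdeg σ (g j))) ≤ toLex D →
        (sPoly σ (g i) (g j) = 0 ∨
          ∃ q : Fin s → MvPolynomial (Fin n) K,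
            sPoly σ (g i) (g j) = ∑ k, q k * g k ∧
            (∀ k, ¬ toLex (d k) ≤ toLex D → q k = 0) ∧
            (∀ k, q k * g k ≠ 0 →
              σ.toSyn (mdeg σ (q k * g k)) ≤ σ.toSyn (mdeg σ (sPoly σ (g i) (g j))))) := by
  intro i j hij hLD
  by_cases hS : sPoly σ (g i) (g j) = 0
  · exact Or.inl hS
  right
  have hmem : sPoly σ (g i) (g j) ∈ Ideal.span (Set.range g) := by
    rw [sPoly]
    exact sub_mem (Ideal.mul_mem_left _ _ (Ideal.subset_span ⟨i, rfl⟩))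
      (Ideal.mul_mem_left _ _ (Ideal.subset_span ⟨j, rfl⟩))
  exact division hpos hg0 hgh hb _ hmem hS _
    (sPoly_isWHomogeneous (hgh i) (hgh j) (hg0 i) (hg0 j)) hLD

end BtoC

section CtoB
variable {K : Type*} [Field K] {m n s : ℕ} {W : Matrix (Fin m) (Fin n) ℤ}
  {σ : MonomialOrder (Fin n)} {g : Fin s → MvPolynomial (Fin n) K}
  {d : Fin s → Fin m → ℤ} {D : Fin m → ℤ} {e : Fin m → ℤ}

/-- From a nonzero homogeneous component of degree `e - d k`, deduce `d k ≤ e` lexicographically. -/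
lemma dk_le_e (hpos : ∀ j : Fin n, ∃ i : Fin m, 0 < W i j ∧ ∀ i' < i, W i' j = 0)
    {x : MvPolynomial (Fin n) K} {dk : Fin m → ℤ}
    (h : hcomp W (e - dk) x ≠ 0) : toLex dk ≤ toLex e := by
  obtain ⟨-, α, hα, hw⟩ := hcomp_ne_zero_imp h
  have h0 : (0 : Lex (Fin m → ℤ)) ≤ toLex (e - dk) := by
    rw [← hw]; exact toLex_wdeg_nonneg hpos α
  have : toLex e = toLex dk + toLex (e - dk) := by
    rw [← toLex_add]; congr 1; ring
  rw [this]
  exact le_add_of_nonneg_right h0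

lemma c_to_b (hpos : ∀ j : Fin n, ∃ i : Fin m, 0 < W i j ∧ ∀ i' < i, W i' j = 0)
    (hg0 : ∀ k, g k ≠ 0) (hgh : ∀ k, IsWHomogeneous W (g k) (d k))
    (hc : ∀ i j : Fin s, i < j →
        toLex (wdeg W (mdeg σ (g i) ⊔ mdeg σ (g j))) ≤ toLex D →
        (sPoly σ (g i) (g j) = 0 ∨
          ∃ q : Fin s → MvPolynomial (Fin n) K,
            sPoly σ (g i) (g j) = ∑ k, q k * g k ∧
            (∀ k, ¬ toLex (d k) ≤ toLex D → q k = 0) ∧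
            (∀ k, q k * g k ≠ 0 →
              σ.toSyn (mdeg σ (q k * g k)) ≤ σ.toSyn (mdeg σ (sPoly σ (g i) (g j)))))) :
    ∀ v ∈ Ideal.span (Set.range g), v ≠ 0 → ∀ e : Fin m → ℤ, IsWHomogeneous W v e →
        toLex e ≤ toLex D →
        ∃ k, toLex (d k) ≤ toLex D ∧ mdeg σ (g k) ≤ mdeg σ v := by
  classical
  intro v hv hv0 e hvhom heD
  set Cond : (Fin s → MvPolynomial (Fin n) K) → Prop := fun q =>
    (v = ∑ k, q k * g k) ∧
    ∀ k, q k ≠ 0 → (toLex (d k) ≤ toLex D ∧ IsWHomogeneous W (q k) (e - d k)) with hCond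
  have MAIN : ∀ δ : σ.syn, ∀ q, Cond q →
      Finset.univ.sup (fun k => σ.toSyn (mdeg σ (q k * g k))) ≤ δ →
      ∃ k, toLex (d k) ≤ toLex D ∧ mdeg σ (g k) ≤ mdeg σ v := by
    intro δ
    induction δ using WellFoundedLT.induction with
    | ind δ IH =>
    set μ := σ.toSyn.symm δ with hμdef
    have hμsyn : σ.toSyn μ = δ := σ.toSyn.apply_symm_apply δ
    have INNER : ∀ t : ℕ, ∀ q, Cond q →
        Finset.univ.sup (fun k => σ.toSyn (mdeg σ (q k * g k))) ≤ δ →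
        (Finset.univ.filter (fun k => (q k * g k).coeff μ ≠ 0)).card ≤ t →
        ∃ k, toLex (d k) ≤ toLex D ∧ mdeg σ (g k) ≤ mdeg σ v := by
      intro t
      induction t using Nat.strong_induction_on with
      | _ t IH2 =>
      intro q hq hsup hcard
      rcases lt_or_eq_of_le hsup with hlt | hsupeq
      · exact IH _ hlt q hq le_rfl
      obtain ⟨hrep, hcond⟩ := hq
      have hboundall : ∀ k, σ.toSyn (mdeg σ (q k * g k)) ≤ δ := by
        intro k
        rw [← hsupeq]
        exact Finset.le_sup (f := fun k => σ.toSyn (mdeg σ (q k * g k))) (Finset.mem_univ k)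
      have hvle : σ.toSyn (mdeg σ v) ≤ δ := by
        have hcv : (∑ k, q k * g k).coeff (mdeg σ v) ≠ 0 := by
          rw [← hrep]; exact coeff_mdeg_ne_zero hv0
        rw [coeff_sum] at hcv
        obtain ⟨k, -, hk⟩ := Finset.exists_ne_zero_of_sum_ne_zero hcv
        exact le_trans (le_mdeg hk) (hboundall k)
      by_cases hcase : σ.toSyn (mdeg σ v) = δ
      · -- the leading term of v appears at level δ : we win
        have hcv : (∑ k, q k * g k).coeff (mdeg σ v) ≠ 0 := by
          rw [← hrep]; exact coeff_mdeg_ne_zero hv0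
        rw [coeff_sum] at hcv
        obtain ⟨k, -, hk⟩ := Finset.exists_ne_zero_of_sum_ne_zero hcv
        have hqk : q k ≠ 0 := by
          intro h; rw [h, zero_mul] at hk; simp at hk
        have h1 : σ.toSyn (mdeg σ (q k * g k)) ≤ σ.toSyn (mdeg σ v) := by
          rw [hcase]; exact hboundall k
        have hmm := σ.toSyn.injective (le_antisymm h1 (le_mdeg hk))
        refine ⟨k, (hcond k hqk).1, ?_⟩
        rw [← hmm, mdeg_mul hqk (hg0 k)]
        exact le_add_self
      -- cancellation case
      have hlt : σ.toSyn (mdeg σ v) < δ := lt_of_le_of_ne hvle hcase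
      have hδpos : 0 < δ := lt_of_le_of_lt (syn_nonneg (σ := σ) (a := σ.toSyn (mdeg σ v))) hlt
      have hcoeffv : v.coeff μ = 0 := by
        apply coeff_eq_zero_of_mdeg_lt
        rw [hμsyn]; exact hlt
      have hsumzero : ∑ k, (q k * g k).coeff μ = 0 := by
        rw [← coeff_sum, ← hrep]; exact hcoeffv
      have hT : ∀ k, (q k * g k).coeff μ ≠ 0 →
          q k ≠ 0 ∧ mdeg σ (q k * g k) = μ ∧ mdeg σ (g k) ≤ μ := by
        intro k hk
        have hqk : q k ≠ 0 := by
          intro h; rw [h, zero_mul] at hk; simp at hk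
        have hmm : mdeg σ (q k * g k) = μ := by
          apply σ.toSyn.injective
          refine le_antisymm ?_ (le_mdeg hk)
          rw [hμsyn]; exact hboundall k
        have hmul : mdeg σ (q k) + mdeg σ (g k) = μ := by
          rw [← mdeg_mul hqk (hg0 k), hmm]
        exact ⟨hqk, hmm, hmul ▸ le_add_self⟩
      have hex : ∃ k₁, (q k₁ * g k₁).coeff μ ≠ 0 := by
        have h1 : ∃ k₁, σ.toSyn (mdeg σ (q k₁ * g k₁)) = δ := by
          by_contra hno
          push_neg at hno
          have hsl : Finset.univ.sup (fun k => σ.toSyn (mdeg σ (q k * g k))) < δ := by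
            rw [Finset.sup_lt_iff (by rwa [σ.bot_eq_zero])]
            exact fun k _ => lt_of_le_of_ne (hboundall k) (hno k)
          exact absurd hsupeq (ne_of_lt hsl)
        obtain ⟨k₁, hk₁⟩ := h1
        have h0 : q k₁ * g k₁ ≠ 0 := by
          intro h; rw [h, mdeg_zero, map_zero] at hk₁
          exact absurd hk₁ (ne_of_lt hδpos)
        have hμ1 : mdeg σ (q k₁ * g k₁) = μ := by
          apply σ.toSyn.injective; rw [hμsyn, hk₁]
        exact ⟨k₁, hμ1 ▸ coeff_mdeg_ne_zero h0⟩
      obtain ⟨k₁, hk₁⟩ := hex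
      have hex2 : ∃ k₂, k₂ ≠ k₁ ∧ (q k₂ * g k₂).coeff μ ≠ 0 := by
        by_contra hno
        push_neg at hno
        have hone : ∑ k, (q k * g k).coeff μ = (q k₁ * g k₁).coeff μ := by
          apply Finset.sum_eq_single_of_mem k₁ (Finset.mem_univ k₁)
          exact fun k _ hkne => hno k hkne
        rw [hsumzero] at hone
        exact hk₁ hone.symm
      obtain ⟨k₂, hk₂ne, hk₂⟩ := hex2
      -- reduce to the case of an ordered pair in T
      suffices H : ∀ i j : Fin s, i < j → (q i * g i).coeff μ ≠ 0 →
          (q j * g j).coeff μ ≠ 0 →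
          ∃ k, toLex (d k) ≤ toLex D ∧ mdeg σ (g k) ≤ mdeg σ v by
        rcases lt_or_gt_of_ne hk₂ne with h | h
        · exact H k₂ k₁ h hk₂ hk₁
        · exact H k₁ k₂ h hk₁ hk₂
      intro i j hij hiT hjT
      obtain ⟨hqi, hmi, hti⟩ := hT i hiT
      obtain ⟨hqj, hmj, htj⟩ := hT j hjT
      set L := mdeg σ (g i) ⊔ mdeg σ (g j) with hLdef
      have hLμ : L ≤ μ := sup_le hti htj
      have hμe : wdeg W μ = e := by
        have h1 : IsWHomogeneous W (q i * g i) ((e - d i) + d i) :=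
          ((hcond i hqi).2).mul (hgh i)
        have h2 := h1.wdeg_eq hiT
        rw [h2]; ring
      have hLD : toLex (wdeg W L) ≤ toLex D := by
        calc toLex (wdeg W L) ≤ toLex (wdeg W μ) := toLex_wdeg_mono hpos hLμ
        _ = toLex e := by rw [hμe]
        _ ≤ toLex D := heD
      -- S-polynomial representation with strict degree drop below L
      obtain ⟨p, hprep, hpzero, hstrict⟩ :
          ∃ p : Fin s → MvPolynomial (Fin n) K,
            sPoly σ (g i) (g j) = ∑ k, p k * g k ∧
            (∀ k, ¬ toLex (d k) ≤ toLex D → p k = 0) ∧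
            (∀ k, p k * g k ≠ 0 → σ.toSyn (mdeg σ (p k * g k)) < σ.toSyn L) := by
        by_cases hS0 : sPoly σ (g i) (g j) = 0
        · exact ⟨0, by simp [hS0], fun k _ => rfl, fun k hk => by simp at hk⟩
        · rcases hc i j hij hLD with h0 | ⟨p, h1, h2, h3⟩
          · exact absurd h0 hS0
          · refine ⟨p, h1, h2, fun k hk => lt_of_le_of_lt (h3 k hk) ?_⟩
            exact toSyn_mdeg_sPoly_lt (hg0 i) (hg0 j) hS0
      set b := (q i * g i).coeff μ with hbdef
      have hb0 : b ≠ 0 := hiT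
      have hlci : (g i).coeff (mdeg σ (g i)) ≠ 0 := coeff_mdeg_ne_zero (hg0 i)
      have hlcj : (g j).coeff (mdeg σ (g j)) ≠ 0 := coeff_mdeg_ne_zero (hg0 j)
      set Ai := monomial (μ - mdeg σ (g i)) (b * ((g i).coeff (mdeg σ (g i)))⁻¹) with hAidef
      set Aj := monomial (μ - mdeg σ (g j)) (b * ((g j).coeff (mdeg σ (g j)))⁻¹) with hAjdef
      have hkey : monomial (μ - L) b * sPoly σ (g i) (g j) = Ai * g i - Aj * g j :=
        monomial_mul_sPoly b hLμ
      set q' : Fin s → MvPolynomial (Fin n) K := fun k =>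
        q k + ((if k = i then -Ai else 0) + (if k = j then Aj else 0) +
          monomial (μ - L) b * p k) with hq'def
      have hsplit : ∀ k, q' k * g k = q k * g k + (if k = i then -Ai else 0) * g k +
          (if k = j then Aj else 0) * g k + monomial (μ - L) b * (p k * g k) := by
        intro k; rw [hq'def]; ring
      have hsum2 : ∑ k, ((if k = i then -Ai else 0) * g k +
          (if k = j then Aj else 0) * g k + monomial (μ - L) b * (p k * g k)) = 0 := by
        rw [Finset.sum_add_distrib, Finset.sum_add_distrib, sum_ite_single i (-Ai),
          sum_ite_single j Aj]
        have hms : ∑ k, monomial (μ - L) b * (p k * g k) =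
            monomial (μ - L) b * sPoly σ (g i) (g j) := by
          rw [← Finset.mul_sum, ← hprep]
        rw [hms, hkey]
        ring
      have hrep' : v = ∑ k, q' k * g k := by
        have hc2 : ∀ k, q' k * g k = q k * g k +
            ((if k = i then -Ai else 0) * g k + (if k = j then Aj else 0) * g k +
              monomial (μ - L) b * (p k * g k)) := by
          intro k; rw [hsplit k]; ring
        rw [Finset.sum_congr rfl (fun k _ => hc2 k), Finset.sum_add_distrib, hsum2,
          add_zero, ← hrep]
      -- degree bound for the new representation
      have hAimdeg : mdeg σ (Ai * g i) = μ := by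
        rw [hAidef, mdeg_monomial_mul (mul_ne_zero hb0 (inv_ne_zero hlci)) (hg0 i),
          tsub_add_cancel_of_le hti]
      have hAjmdeg : mdeg σ (Aj * g j) = μ := by
        rw [hAjdef, mdeg_monomial_mul (mul_ne_zero hb0 (inv_ne_zero hlcj)) (hg0 j),
          tsub_add_cancel_of_le htj]
      have hppartlt : ∀ k, p k * g k ≠ 0 →
          σ.toSyn (mdeg σ (monomial (μ - L) b * (p k * g k))) < δ := by
        intro k hk
        rw [mdeg_monomial_mul hb0 hk, map_add]
        calc σ.toSyn (μ - L) + σ.toSyn (mdeg σ (p k * g k))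
            < σ.toSyn (μ - L) + σ.toSyn L := by
              exact (add_lt_add_iff_left _).mpr (hstrict k hk)
        _ = σ.toSyn ((μ - L) + L) := by rw [map_add]
        _ = δ := by rw [tsub_add_cancel_of_le hLμ, hμsyn]
      have hppartle : ∀ k, σ.toSyn (mdeg σ (monomial (μ - L) b * (p k * g k))) ≤ δ := by
        intro k
        by_cases hk : p k * g k = 0
        · rw [hk, mul_zero, mdeg_zero, map_zero]; exact le_of_lt hδpos
        · exact le_of_lt (hppartlt k hk)
      have hbound' : ∀ k, σ.toSyn (mdeg σ (q' k * g k)) ≤ δ := by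
        intro k
        rw [hsplit k]
        refine le_trans toSyn_mdeg_add_le (max_le (le_trans toSyn_mdeg_add_le
          (max_le (le_trans toSyn_mdeg_add_le (max_le (hboundall k) ?_)) ?_)) (hppartle k))
        · by_cases hki : k = i
          · subst hki
            rw [if_pos rfl, neg_mul, mdeg_neg, hAimdeg, hμsyn]
          · rw [if_neg hki, zero_mul, mdeg_zero, map_zero]
            exact le_of_lt hδpos
        · by_cases hkj : k = j
          · subst hkj
            rw [if_pos rfl, hAjmdeg, hμsyn]
          · rw [if_neg hkj, zero_mul, mdeg_zero, map_zero]
            exact le_of_lt hδpos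
      -- coefficient of μ in the new terms
      have hpcoeff : ∀ k, (monomial (μ - L) b * (p k * g k)).coeff μ = 0 := by
        intro k
        by_cases hk : p k * g k = 0
        · rw [hk, mul_zero, coeff_zero]
        · apply coeff_eq_zero_of_mdeg_lt
          rw [hμsyn]; exact hppartlt k hk
      have hAicoeff : (Ai * g i).coeff μ = b := by
        rw [hAidef, coeff_key (tsub_add_cancel_of_le hti), mul_assoc,
          inv_mul_cancel₀ hlci, mul_one]
      -- homogenize
      set q'' : Fin s → MvPolynomial (Fin n) K := fun k => hcomp W (e - d k) (q' k)
        with hq''def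
      have hrep'' : v = ∑ k, q'' k * g k := rep_homogenize hgh hvhom hrep'
      have hcond'' : Cond q'' := by
        refine ⟨hrep'', fun k hk => ⟨le_trans (dk_le_e hpos hk) heD, ?_⟩⟩
        exact hcomp_isWHomogeneous
      have hsup'' : Finset.univ.sup (fun k => σ.toSyn (mdeg σ (q'' k * g k))) ≤ δ := by
        apply Finset.sup_le
        intro k _
        by_cases hk0 : q'' k = 0
        · rw [hk0, zero_mul, mdeg_zero, map_zero]; exact le_of_lt hδpos
        · have hq'k0 : q' k ≠ 0 := by
            intro h
            apply hk0
            rw [hq''def]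
            simp only [h]
            ext β
            rw [coeff_hcomp]
            split <;> simp
          rw [mdeg_mul hk0 (hg0 k), map_add]
          refine le_trans ?_ (hbound' k)
          rw [mdeg_mul hq'k0 (hg0 k), map_add]
          exact (add_le_add_iff_right _).mpr toSyn_mdeg_hcomp_le
      have hcoeff'' : ∀ k, (q'' k * g k).coeff μ = (q' k * g k).coeff μ := by
        intro k
        rw [hq''def]
        exact coeff_hcomp_mul (hgh k) (by rw [hμe]; ring)
      have hT'' : ∀ k, (q'' k * g k).coeff μ ≠ 0 → (q k * g k).coeff μ ≠ 0 ∧ k ≠ i := by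
        intro k hk
        rw [hcoeff'' k] at hk
        have hexp : (q' k * g k).coeff μ = (q k * g k).coeff μ +
            ((if k = i then -Ai else 0) * g k).coeff μ +
            ((if k = j then Aj else 0) * g k).coeff μ +
            (monomial (μ - L) b * (p k * g k)).coeff μ := by
          rw [hsplit k, coeff_add, coeff_add, coeff_add]
        rw [hexp, hpcoeff k, add_zero] at hk
        have hki : k ≠ i := by
          intro hki
          subst hki
          simp only [eq_self_iff_true, if_true, if_neg (ne_of_lt hij), zero_mul,
            coeff_zero, add_zero, neg_mul, coeff_neg, hAicoeff] at hk
          exact hk (by rw [← hbdef, add_neg_cancel])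
        refine ⟨?_, hki⟩
        by_cases hkj : k = j
        · subst hkj; exact hjT
        · simp only [if_neg hki, if_neg hkj, zero_mul, coeff_zero, add_zero] at hk
          exact hk
      have hcard'' :
          (Finset.univ.filter (fun k => (q'' k * g k).coeff μ ≠ 0)).card <
          (Finset.univ.filter (fun k => (q k * g k).coeff μ ≠ 0)).card := by
        apply Finset.card_lt_card
        constructor
        · intro k hk
          rw [Finset.mem_filter] at hk ⊢
          exact ⟨Finset.mem_univ k, (hT'' k hk.2).1⟩
        · intro hsub
          have hi1 : i ∈ Finset.univ.filter (fun k => (q k * g k).coeff μ ≠ 0) := by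
            rw [Finset.mem_filter]; exact ⟨Finset.mem_univ i, hiT⟩
          have hi2 := hsub hi1
          rw [Finset.mem_filter] at hi2
          exact (hT'' i hi2.2).2 rfl
      exact IH2 _ (lt_of_lt_of_le hcard'' hcard) q'' hcond'' hsup'' le_rfl
    exact fun q hq hsup => INNER _ q hq hsup le_rfl
  obtain ⟨c0, hc0⟩ := Ideal.mem_span_range_iff_exists_fun.mp hv
  have hc0' : v = ∑ k, c0 k * g k := by
    rw [← hc0]
  have hrep0 := rep_homogenize (W := W) (e := e) hgh hvhom hc0'
  refine MAIN _ (fun k => hcomp W (e - d k) (c0 k)) ⟨hrep0, ?_⟩ le_rfl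
  intro k hk
  exact ⟨le_trans (dk_le_e hpos hk) heD, hcomp_isWHomogeneous⟩

end CtoB



/-- Characterization of truncated Gröbner bases (Buchberger criterion for truncations):
for `W`-homogeneous generators `g_1,…,g_s` of an ideal `I` and a degree `D ∈ ℤ^m`,
condition (b) — every nonzero `W`-homogeneous `v ∈ I` of `W`-degree `≤_Lex D` has its
leading term divisible by the leading term of some `g_k` with `d_k ≤_Lex D` — is
equivalent to condition (c) — every S-polynomial `S_ij` with
`deg_W(x^(L_ij)) ≤_Lex D` is zero or has a representation `S_ij = ∑ q_k g_k` with `q_k = 0`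
unless `d_k ≤_Lex D` and `deg_σ(q_k g_k) ≤_σ deg_σ(S_ij)` whenever `q_k g_k ≠ 0`. -/
theorem stmt_7 {K : Type*} [Field K] {m n s : ℕ} (W : Matrix (Fin m) (Fin n) ℤ)
    (hW : PositiveGrading W) (σ : MonomialOrder (Fin n))
    (g : Fin s → MvPolynomial (Fin n) K) (hg0 : ∀ k, g k ≠ 0)
    (d : Fin s → Fin m → ℤ) (hgh : ∀ k, IsWHomogeneous W (g k) (d k))
    (D : Fin m → ℤ) :
    (∀ v ∈ Ideal.span (Set.range g), v ≠ 0 → ∀ e : Fin m → ℤ, IsWHomogeneous W v e →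
        toLex e ≤ toLex D →
        ∃ k, toLex (d k) ≤ toLex D ∧ mdeg σ (g k) ≤ mdeg σ v) ↔
      (∀ i j : Fin s, i < j →
        toLex (wdeg W (mdeg σ (g i) ⊔ mdeg σ (g j))) ≤ toLex D →
        (sPoly σ (g i) (g j) = 0 ∨
          ∃ q : Fin s → MvPolynomial (Fin n) K,
            sPoly σ (g i) (g j) = ∑ k, q k * g k ∧
            (∀ k, ¬ toLex (d k) ≤ toLex D → q k = 0) ∧
            (∀ k, q k * g k ≠ 0 →
              σ.toSyn (mdeg σ (q k * g k)) ≤ σ.toSyn (mdeg σ (sPoly σ (g i) (g j)))))) := by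
  constructor
  · intro hb
    exact b_to_c hW.2.2 hg0 hgh hb
  · intro hcc
    exact c_to_b hW.2.2 hg0 hgh hcc
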